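/- For all n ≥ 4 and each k, the map swapping the last two entries p_{n-1} and p_n of a permutation of {1,...,n} changes its number of runs by exactly 1 (increasing it for exactly half of all permutations and decreasing it for the other half). -/

import Mathlib

open Finset

/-- The value of the permutation `p` at (0-indexed) position `i`, as a natural number. -/
def permVal (n : ℕ) (p : Equiv.Perm (Fin n)) (i : ℕ) : ℕ :=
  if h : i < n then (p ⟨i, h⟩ : ℕ) else 0

/-- `p` changes direction at 0-indexed interior position `i` (peak or valley). -/
def dirChange (n : ℕ) (p : Equiv.Perm (Fin n)) (i : ℕ) : Prop :=
  (permVal n p (i-1) < permVal n p i ∧ permVal n p (i+1) < permVal n p i) ∨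
  (permVal n p i < permVal n p (i-1) ∧ permVal n p i < permVal n p (i+1))

instance (n : ℕ) (p : Equiv.Perm (Fin n)) : DecidablePred (dirChange n p) := fun i => by
  unfold dirChange; infer_instance

/-- Number of runs of a permutation: one more than the number of interior direction changes. -/
def numRuns (n : ℕ) (p : Equiv.Perm (Fin n)) : ℕ :=
  ((Finset.Ico 1 (n-1)).filter (dirChange n p)).card + 1

/-- `R n k` is the number of permutations of `{1,...,n}` with exactly `k` runs. -/
def R (n k : ℕ) : ℕ :=
  (Finset.univ.filter (fun p : Equiv.Perm (Fin n) => numRuns n p = k)).card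

/-- Number of descents of a permutation. -/
def numDescents (n : ℕ) (p : Equiv.Perm (Fin n)) : ℕ :=
  ((Finset.range (n-1)).filter (fun i => permVal n p (i+1) < permVal n p i)).card

/-- `A n k`: Eulerian numbers, counting permutations with `k` descents. -/
def A (n k : ℕ) : ℕ :=
  (Finset.univ.filter (fun p : Equiv.Perm (Fin n) => numDescents n p = k)).card

/-- The run-generating polynomial `R_n(x) = Σ_k R(n,k) x^k`. -/
noncomputable def Rpoly (n : ℕ) : Polynomial ℤ :=
  ∑ k ∈ Finset.range n, Polynomial.C ((R n k : ℤ)) * Polynomial.X ^ k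

/-- `p` is `j`-half-ascending: `p_{n+1-2i} < p_{n+2-2i}` (1-indexed) for all `1 ≤ i ≤ j`. -/
def HalfAscJ (n j : ℕ) (p : Equiv.Perm (Fin n)) : Prop :=
  ∀ i ∈ Finset.Icc 1 j, permVal n p (n - 2*i) < permVal n p (n + 1 - 2*i)

instance (n j : ℕ) : DecidablePred (HalfAscJ n j) := fun p => by
  unfold HalfAscJ; infer_instance

/-- For `n` even: `p` is half-ascending if `p_{2i-1} < p_{2i}` (1-indexed) for `1 ≤ i ≤ n/2`. -/
def HalfAsc (n : ℕ) (p : Equiv.Perm (Fin n)) : Prop :=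
  ∀ i ∈ Finset.range (n/2), permVal n p (2*i) < permVal n p (2*i+1)

instance (n : ℕ) : DecidablePred (HalfAsc n) := fun p => by
  unfold HalfAsc; infer_instance

/-- `U n k`: number of half-ascending permutations with exactly `k` descents. -/
def U (n k : ℕ) : ℕ :=
  (Finset.univ.filter (fun p : Equiv.Perm (Fin n) =>
    HalfAsc n p ∧ numDescents n p = k)).card

/-- Number of runs of the prefix `p_1, ..., p_L` (1-indexed). -/
def prefixRuns (n L : ℕ) (p : Equiv.Perm (Fin n)) : ℕ :=
  ((Finset.Ico 1 (L-1)).filter (dirChange n p)).card + 1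

/-- Number of descents of the suffix starting at 0-indexed position `a`. -/
def suffixDescents (n a : ℕ) (p : Equiv.Perm (Fin n)) : ℕ :=
  ((Finset.Ico a (n-1)).filter (fun i => permVal n p (i+1) < permVal n p i)).card

/-- `t_j(p) = r_j(p) + s_j(p)`: runs of the prefix `p_1..p_{n-2j}` plus descents of the
suffix `p_{n-2j}..p_n`. -/
def tstat (n j : ℕ) (p : Equiv.Perm (Fin n)) : ℕ :=
  prefixRuns n (n - 2*j) p + suffixDescents n (n - 2*j - 1) p

/-- `R_{n,j}(x) = Σ_p x^{t_j(p)}` over `j`-half-ascending permutations `p`. -/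
noncomputable def RpolyJ (n j : ℕ) : Polynomial ℤ :=
  ∑ p ∈ Finset.univ.filter (HalfAscJ n j), Polynomial.X ^ (tstat n j p)

/-- A labeled northeastern lattice path with `n` edges, encoded as a function assigning to the
`i`-th edge (0-indexed; the paper's edge `a_{i+1}`) a direction (`true` = vertical) and a label.
Conditions (1)-(3) of the paper. -/
def IsLPath (n : ℕ) (f : Fin n → Bool × ℕ) : Prop :=
  (∀ i : Fin n, 1 ≤ (f i).2) ∧
  (∀ h : 0 < n, (f ⟨0, h⟩).1 = false ∧ (f ⟨0, h⟩).2 = 1) ∧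
  (∀ i : ℕ, (h : i + 1 < n) →
    ((f ⟨i, Nat.lt_of_succ_lt h⟩).1 = (f ⟨i+1, h⟩).1 →
      (f ⟨i+1, h⟩).2 ≤ (f ⟨i, Nat.lt_of_succ_lt h⟩).2) ∧
    ((f ⟨i, Nat.lt_of_succ_lt h⟩).1 ≠ (f ⟨i+1, h⟩).1 →
      (f ⟨i, Nat.lt_of_succ_lt h⟩).2 + (f ⟨i+1, h⟩).2 ≤ i + 2))

/-- The number of vertical edges of a labeled lattice path. -/
def vertCount (n : ℕ) (f : Fin n → Bool × ℕ) : ℕ :=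
  (Finset.univ.filter (fun i : Fin n => (f i).1 = true)).card

private lemma permVal_inj (n : ℕ) (p : Equiv.Perm (Fin n)) {i j : ℕ} (hi : i < n) (hj : j < n)
    (hij : i ≠ j) : permVal n p i ≠ permVal n p j := by
  unfold permVal
  rw [dif_pos hi, dif_pos hj]
  intro h
  exact hij (congrArg Fin.val (p.injective (Fin.val_injective h)))

private lemma permVal_trans_lt (n : ℕ) (hn : 4 ≤ n) (p : Equiv.Perm (Fin n)) (i : ℕ)
    (hi : i < n - 2) :
    permVal n ((Equiv.swap (⟨n-2, Nat.sub_lt (by omega) (by omega)⟩ : Fin n) ⟨n-1, Nat.sub_lt (by omega) (by omega)⟩).trans p) i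
      = permVal n p i := by
  have h : i < n := by omega
  unfold permVal
  rw [dif_pos h, dif_pos h, Equiv.trans_apply,
    Equiv.swap_apply_of_ne_of_ne (Fin.ne_of_val_ne (by simp; omega))
      (Fin.ne_of_val_ne (by simp; omega))]

private lemma permVal_trans_n2 (n : ℕ) (hn : 4 ≤ n) (p : Equiv.Perm (Fin n)) :
    permVal n ((Equiv.swap (⟨n-2, Nat.sub_lt (by omega) (by omega)⟩ : Fin n) ⟨n-1, Nat.sub_lt (by omega) (by omega)⟩).trans p) (n-2)
      = permVal n p (n-1) := by
  have h2 : n - 2 < n := by omega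
  have h1 : n - 1 < n := by omega
  unfold permVal
  rw [dif_pos h2, dif_pos h1, Equiv.trans_apply, Equiv.swap_apply_left]

private lemma permVal_trans_n1 (n : ℕ) (hn : 4 ≤ n) (p : Equiv.Perm (Fin n)) :
    permVal n ((Equiv.swap (⟨n-2, Nat.sub_lt (by omega) (by omega)⟩ : Fin n) ⟨n-1, Nat.sub_lt (by omega) (by omega)⟩).trans p) (n-1)
      = permVal n p (n-2) := by
  have h2 : n - 2 < n := by omega
  have h1 : n - 1 < n := by omega
  unfold permVal
  rw [dif_pos h1, dif_pos h2, Equiv.trans_apply, Equiv.swap_apply_right]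

private lemma split_card (n : ℕ) (hn : 4 ≤ n) (P : ℕ → Prop) [DecidablePred P] :
    ((Finset.Ico 1 (n-1)).filter P).card =
      ((Finset.Ico 1 (n-3)).filter P).card +
        ((if P (n-3) then 1 else 0) + (if P (n-2) then 1 else 0)) := by
  have h : Finset.Ico 1 (n-1) = Finset.Ico 1 (n-3) ∪ {n-3, n-2} := by
    ext x
    simp only [Finset.mem_union, Finset.mem_Ico, Finset.mem_insert, Finset.mem_singleton]
    omega
  rw [h, Finset.filter_union, Finset.card_union_of_disjoint]
  · congr 1
    rw [Finset.filter_insert, Finset.filter_singleton]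
    have hne : n - 3 ≠ n - 2 := by omega
    split_ifs <;> simp [hne]
  · rw [Finset.disjoint_left]
    intro x hx hx2
    simp only [Finset.mem_filter, Finset.mem_Ico, Finset.mem_insert, Finset.mem_singleton]
      at hx hx2
    omega

private lemma keylem (n : ℕ) (hn : 4 ≤ n) (p : Equiv.Perm (Fin n)) :
    numRuns n ((Equiv.swap (⟨n-2, Nat.sub_lt (by omega) (by omega)⟩ : Fin n) ⟨n-1, Nat.sub_lt (by omega) (by omega)⟩).trans p)
        = numRuns n p + 1 ∨
    numRuns n ((Equiv.swap (⟨n-2, Nat.sub_lt (by omega) (by omega)⟩ : Fin n) ⟨n-1, Nat.sub_lt (by omega) (by omega)⟩).trans p) + 1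
        = numRuns n p := by
  obtain ⟨q, hqdef⟩ : ∃ q, (Equiv.swap (⟨n-2, Nat.sub_lt (by omega) (by omega)⟩ : Fin n) ⟨n-1, Nat.sub_lt (by omega) (by omega)⟩).trans p = q :=
    ⟨_, rfl⟩
  have e1 : n - 3 - 1 = n - 4 := by omega
  have e2 : n - 3 + 1 = n - 2 := by omega
  have e3 : n - 2 - 1 = n - 3 := by omega
  have e4 : n - 2 + 1 = n - 1 := by omega
  have d43 : permVal n p (n-4) ≠ permVal n p (n-3) :=
    permVal_inj n p (Nat.sub_lt (by omega) (by omega)) (Nat.sub_lt (by omega) (by omega))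
      (by omega)
  have d42 : permVal n p (n-4) ≠ permVal n p (n-2) :=
    permVal_inj n p (Nat.sub_lt (by omega) (by omega)) (Nat.sub_lt (by omega) (by omega))
      (by omega)
  have d41 : permVal n p (n-4) ≠ permVal n p (n-1) :=
    permVal_inj n p (Nat.sub_lt (by omega) (by omega)) (Nat.sub_lt (by omega) (by omega))
      (by omega)
  have d32 : permVal n p (n-3) ≠ permVal n p (n-2) :=
    permVal_inj n p (Nat.sub_lt (by omega) (by omega)) (Nat.sub_lt (by omega) (by omega))
      (by omega)
  have d31 : permVal n p (n-3) ≠ permVal n p (n-1) :=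
    permVal_inj n p (Nat.sub_lt (by omega) (by omega)) (Nat.sub_lt (by omega) (by omega))
      (by omega)
  have d21 : permVal n p (n-2) ≠ permVal n p (n-1) :=
    permVal_inj n p (Nat.sub_lt (by omega) (by omega)) (Nat.sub_lt (by omega) (by omega))
      (by omega)
  rw [hqdef]
  have hq4 : permVal n q (n-4) = permVal n p (n-4) := by
    rw [← hqdef]; exact permVal_trans_lt n hn p _ (by omega)
  have hq3v : permVal n q (n-3) = permVal n p (n-3) := by
    rw [← hqdef]; exact permVal_trans_lt n hn p _ (by omega)
  have hq2v : permVal n q (n-2) = permVal n p (n-1) := by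
    rw [← hqdef]; exact permVal_trans_n2 n hn p
  have hq1v : permVal n q (n-1) = permVal n p (n-2) := by
    rw [← hqdef]; exact permVal_trans_n1 n hn p
  have hq3 : dirChange n q (n-3) ↔
      ((permVal n p (n-4) < permVal n p (n-3) ∧ permVal n p (n-1) < permVal n p (n-3)) ∨
       (permVal n p (n-3) < permVal n p (n-4) ∧ permVal n p (n-3) < permVal n p (n-1))) := by
    unfold dirChange; rw [e1, e2, hq4, hq3v, hq2v]
  have hq2 : dirChange n q (n-2) ↔
      ((permVal n p (n-3) < permVal n p (n-1) ∧ permVal n p (n-2) < permVal n p (n-1)) ∨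
       (permVal n p (n-1) < permVal n p (n-3) ∧ permVal n p (n-1) < permVal n p (n-2))) := by
    unfold dirChange; rw [e3, e4, hq3v, hq2v, hq1v]
  have hp3 : dirChange n p (n-3) ↔
      ((permVal n p (n-4) < permVal n p (n-3) ∧ permVal n p (n-2) < permVal n p (n-3)) ∨
       (permVal n p (n-3) < permVal n p (n-4) ∧ permVal n p (n-3) < permVal n p (n-2))) := by
    unfold dirChange; rw [e1, e2]
  have hp2 : dirChange n p (n-2) ↔
      ((permVal n p (n-3) < permVal n p (n-2) ∧ permVal n p (n-1) < permVal n p (n-2)) ∨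
       (permVal n p (n-2) < permVal n p (n-3) ∧ permVal n p (n-2) < permVal n p (n-1))) := by
    unfold dirChange; rw [e3, e4]
  have hfe : (Finset.Ico 1 (n-3)).filter (dirChange n q)
      = (Finset.Ico 1 (n-3)).filter (dirChange n p) := by
    apply Finset.filter_congr
    intro i hi
    simp only [Finset.mem_Ico] at hi
    unfold dirChange
    rw [← hqdef, permVal_trans_lt n hn p (i-1) (by omega), permVal_trans_lt n hn p i (by omega),
      permVal_trans_lt n hn p (i+1) (by omega)]
  unfold numRuns
  rw [split_card n hn (dirChange n q), split_card n hn (dirChange n p), hfe]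
  simp only [hq3, hq2, hp3, hp2]
  clear hq3 hq2 hp3 hp2 hq4 hq3v hq2v hq1v hfe hqdef
  split_ifs <;> omega

private lemma half_lemma (α : Type*) [Fintype α] [DecidableEq α] (g : α → α) (hg : ∀ x, g (g x) = x)
    (F : α → ℕ) (hkey : ∀ x, F (g x) = F x + 1 ∨ F (g x) + 1 = F x) :
    2 * (Finset.univ.filter (fun x => F (g x) = F x + 1)).card = Fintype.card α ∧
    2 * (Finset.univ.filter (fun x => F (g x) + 1 = F x)).card = Fintype.card α := by
  set S1 := Finset.univ.filter (fun x => F (g x) = F x + 1) with hS1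
  set S2 := Finset.univ.filter (fun x => F (g x) + 1 = F x) with hS2
  have hcard : S1.card = S2.card := by
    apply Finset.card_bij (fun x _ => g x)
    · intro x hx
      simp only [hS1, hS2, Finset.mem_filter, Finset.mem_univ, true_and] at *
      rw [hg]; omega
    · intro x _ y _ hxy
      have h := congrArg g hxy
      rwa [hg, hg] at h
    · intro y hy
      refine ⟨g y, ?_, hg y⟩
      simp only [hS1, hS2, Finset.mem_filter, Finset.mem_univ, true_and] at *
      rw [hg]; omega
  have hunion : S1 ∪ S2 = Finset.univ := by
    ext x
    simp only [hS1, hS2, Finset.mem_union, Finset.mem_filter, Finset.mem_univ, true_and,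
      iff_true]
    exact hkey x
  have hdisj : Disjoint S1 S2 := by
    rw [Finset.disjoint_left]
    intro x hx1 hx2
    simp only [hS1, hS2, Finset.mem_filter] at hx1 hx2
    omega
  have hc := Finset.card_union_of_disjoint hdisj
  rw [hunion, Finset.card_univ] at hc
  omega

/-- for `n ≥ 4`, swapping the last two entries changes the number of runs by
exactly 1, increasing it for exactly half of all permutations and decreasing it for the
other half. -/
theorem stmt1 (n : ℕ) (hn : 4 ≤ n) :
    (∀ p : Equiv.Perm (Fin n),
      numRuns n ((Equiv.swap (⟨n-2, by omega⟩ : Fin n) ⟨n-1, by omega⟩).trans p)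
          = numRuns n p + 1 ∨
      numRuns n ((Equiv.swap (⟨n-2, by omega⟩ : Fin n) ⟨n-1, by omega⟩).trans p) + 1
          = numRuns n p) ∧
    2 * (Finset.univ.filter (fun p : Equiv.Perm (Fin n) =>
        numRuns n ((Equiv.swap (⟨n-2, by omega⟩ : Fin n) ⟨n-1, by omega⟩).trans p)
          = numRuns n p + 1)).card = Nat.factorial n ∧
    2 * (Finset.univ.filter (fun p : Equiv.Perm (Fin n) =>
        numRuns n ((Equiv.swap (⟨n-2, by omega⟩ : Fin n) ⟨n-1, by omega⟩).trans p) + 1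
          = numRuns n p)).card = Nat.factorial n := by
  
  have hg : ∀ p : Equiv.Perm (Fin n),
      (Equiv.swap (⟨n-2, by omega⟩ : Fin n) ⟨n-1, by omega⟩).trans
        ((Equiv.swap (⟨n-2, by omega⟩ : Fin n) ⟨n-1, by omega⟩).trans p) = p := by
    intro p
    ext x
    simp [Equiv.swap_apply_self]
  have h := half_lemma (Equiv.Perm (Fin n))
    (fun p => (Equiv.swap (⟨n-2, by omega⟩ : Fin n) ⟨n-1, by omega⟩).trans p)
    hg (numRuns n) (fun p => keylem n hn p)
  rw [Fintype.card_perm, Fintype.card_fin] at h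
  exact ⟨fun p => keylem n hn p, h.1, h.2⟩
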